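/- Let b ∈ ℝ^d satisfy b_1 ≥ ⋯ ≥ b_d, let S_i be partial sums, and let k₀ ∈ {0,…,d} satisfy b_{k₀} ≥ S_{k₀}/(k₀+1) (or k₀ = 0) and b_{k₀+1} < S_{k₀+1}/(k₀+2) (or k₀ = d). Define x*_i = (1/2)(S_{k₀}/(1+k₀) − b_i) for i ≤ k₀ and x*_i = 0 otherwise, and λ*_i = 0 for i ≤ k₀ and λ*_i = S_{k₀}/(1+k₀) − b_i otherwise. Then (x*, λ*) satisfies the KKT conditions: Q_d x* + b + λ* = 0, x* ≤ 0, λ* ≥ 0, and x*ᵀλ* = 0, where Q_d = 2I_d + 2J_d. -/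

import Mathlib

open Matrix Finset

def Qmat (d : ℕ) : Matrix (Fin d) (Fin d) ℝ :=
  (2 : ℝ) • (1 : Matrix (Fin d) (Fin d) ℝ) + (2 : ℝ) • Matrix.of (fun _ _ => (1 : ℝ))

theorem stmt7 (d : ℕ) (b : Fin d → ℝ)
    (hb : ∀ i j : Fin d, i ≤ j → b j ≤ b i)
    (k₀ : ℕ) (hk₀ : k₀ ≤ d)
    (S : ℝ) (hS : S = ∑ i : Fin d, if (i : ℕ) < k₀ then b i else 0)
    (hlow : ∀ i : Fin d, (i : ℕ) + 1 = k₀ → S / ((k₀ : ℝ) + 1) ≤ b i)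
    (hhigh : ∀ i : Fin d, (i : ℕ) = k₀ → b i < (S + b i) / ((k₀ : ℝ) + 2))
    (xs lam : Fin d → ℝ)
    (hx : ∀ i : Fin d, xs i =
      if (i : ℕ) < k₀ then (1 / 2 : ℝ) * (S / (1 + (k₀ : ℝ)) - b i) else 0)
    (hlam : ∀ i : Fin d, lam i =
      if (i : ℕ) < k₀ then 0 else S / (1 + (k₀ : ℝ)) - b i) :
    (Qmat d).mulVec xs + b + lam = 0 ∧ (∀ i, xs i ≤ 0) ∧ (∀ i, 0 ≤ lam i)
      ∧ xs ⬝ᵥ lam = 0 := by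
  have hk1 : (1 + (k₀ : ℝ)) ≠ 0 := by positivity
  set t : ℝ := S / (1 + (k₀ : ℝ)) with ht
  have hts : (1 + (k₀ : ℝ)) * t = S := by rw [ht]; field_simp
  -- count
  have hcount : ∑ i : Fin d, (if (i : ℕ) < k₀ then t else 0) = (k₀ : ℝ) * t := by
    rw [Fin.sum_univ_eq_sum_range (fun i => if i < k₀ then t else 0)]
    rw [Finset.sum_ite, Finset.sum_const_zero, add_zero, Finset.sum_const]
    have hf : (Finset.range d).filter (· < k₀) = Finset.range k₀ := by
      ext m; simp; omega
    rw [hf]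
    simp [mul_comm]
  have hsum_xs : ∑ i : Fin d, xs i = -(t / 2) := by
    have h1 : ∑ i : Fin d, xs i
        = ∑ i : Fin d, ((1 / 2 : ℝ) * ((if (i : ℕ) < k₀ then t else 0)
            - (if (i : ℕ) < k₀ then b i else 0))) := by
      apply Finset.sum_congr rfl
      intro i _
      rw [hx i]
      by_cases h : (i : ℕ) < k₀ <;> simp [h]
    rw [h1, ← Finset.mul_sum, Finset.sum_sub_distrib, hcount, ← hS]
    have : (k₀ : ℝ) * t - S = -t := by linarith
    rw [this]; ring
  have hmv : ∀ i, (Qmat d).mulVec xs i = 2 * xs i + 2 * ∑ j : Fin d, xs j := by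
    intro i
    simp only [Qmat, Matrix.mulVec, dotProduct, Matrix.add_apply, Matrix.smul_apply,
      Matrix.of_apply, Matrix.one_apply, smul_eq_mul, mul_ite, mul_one, mul_zero, add_mul,
      ite_mul, zero_mul]
    rw [Finset.sum_add_distrib, Finset.sum_ite_eq Finset.univ i (fun j => 2 * xs j)]
    simp [Finset.mul_sum]
  refine ⟨?_, ?_, ?_, ?_⟩
  · funext i
    simp only [Pi.add_apply, Pi.zero_apply]
    rw [hmv i, hsum_xs, hx i, hlam i]
    by_cases h : (i : ℕ) < k₀ <;> simp [h] <;> ring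
  · intro i
    rw [hx i]
    by_cases h : (i : ℕ) < k₀
    · simp only [h, if_true]
      have hk : k₀ - 1 < d := by omega
      have hj := hlow ⟨k₀ - 1, hk⟩ (by simp; omega)
      have hbi : b ⟨k₀ - 1, hk⟩ ≤ b i := hb i ⟨k₀ - 1, hk⟩ (by
        show (i : ℕ) ≤ k₀ - 1; omega)
      have : t ≤ b i := le_trans (by rw [ht, add_comm]; exact hj) hbi
      linarith
    · simp [h]
  · intro i
    rw [hlam i]
    by_cases h : (i : ℕ) < k₀
    · simp [h]
    · simp only [h, if_false]
      have hk : k₀ < d := by omega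
      have hj := hhigh ⟨k₀, hk⟩ rfl
      set c := b ⟨k₀, hk⟩ with hc
      have h2 : (0 : ℝ) < (k₀ : ℝ) + 2 := by positivity
      have h3 : c * ((k₀ : ℝ) + 2) < S + c := by
        have := (lt_div_iff₀ h2).mp hj
        linarith
      have h4 : c < t := by
        rw [ht, lt_div_iff₀ (by positivity : (0:ℝ) < 1 + (k₀:ℝ))]
        nlinarith
      have hbi : b i ≤ c := hb ⟨k₀, hk⟩ i (by show k₀ ≤ (i : ℕ); omega)
      linarith
  · rw [dotProduct]
    apply Finset.sum_eq_zero
    intro i _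
    rw [hx i, hlam i]
    by_cases h : (i : ℕ) < k₀ <;> simp [h]
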